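/- Let d = p^r with p prime. If a quantum state ρ lies in the real span of the KD-classical pure-state projections and ρ is KD-classical (all KD quasiprobabilities nonnegative), then ρ lies in the convex hull of the KD-classical pure-state projections: KD^+_{A,B} ∩ span_ℝ(pure(KD^+_{A,B})) = conv(pure(KD^+_{A,B})). -/

import Mathlib

open Finset Complex
open scoped ComplexOrder

/-- ω_n = e^{2πi/n} -/
noncomputable def ww (n : ℕ) : ℂ := Complex.exp (2 * Real.pi * Complex.I / n)

/-- |ψ_{m,s}⟩ = (1/√x) ∑_{k<x} ω_x^{sk} |a_{ky+m}⟩ in ℂ^d (standard basis coords). -/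
noncomputable def psi (d x y m s : ℕ) : Fin d → ℂ :=
  fun t => (1 / Real.sqrt x) *
    ∑ k ∈ Finset.range x, ww x ^ (s * k) * (if (t : ℕ) = k * y + m then 1 else 0)

/-- Fourier basis vector |b_j⟩, coordinates in the standard basis. -/
noncomputable def bvec (d j : ℕ) : Fin d → ℂ :=
  fun i => ww d ^ ((i : ℕ) * j) / Real.sqrt d

/-- rank one projection |v⟩⟨v| as a matrix. -/
noncomputable def proj {d : ℕ} (v : Fin d → ℂ) : Matrix (Fin d) (Fin d) ℂ :=
  fun i j => v i * (starRingEnd ℂ) (v j)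

/-- KD quasiprobability Q_{ij}(ρ) = ⟨a_i|ρ|b_j⟩⟨b_j|a_i⟩ (standard/Fourier bases). -/
noncomputable def KD {d : ℕ} (ρ : Matrix (Fin d) (Fin d) ℂ) (i j : Fin d) : ℂ :=
  (∑ l, ρ i l * bvec d (j : ℕ) l) * (starRingEnd ℂ) (bvec d (j : ℕ) i)

/-- The set of KD-classical pure-state projections for the DFT pair in dimension d. -/
def pureKD (d : ℕ) : Set (Matrix (Fin d) (Fin d) ℂ) :=
  {M | ∃ x y m s : ℕ, x * y = d ∧ m < y ∧ s < x ∧ M = proj (psi d x y m s)}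

lemma ww_prim {n : ℕ} (hn : n ≠ 0) : IsPrimitiveRoot (ww n) n :=
  Complex.isPrimitiveRoot_exp n hn

lemma ww_abs (n : ℕ) : ‖ww n‖ = 1 := by
  rw [ww, Complex.norm_exp]
  have : (2 * (Real.pi:ℂ) * Complex.I / n).re = 0 := by
    simp [Complex.div_re]
  rw [this, Real.exp_zero]

lemma ww_ne_zero (n : ℕ) : ww n ≠ 0 := by
  intro h0
  have := ww_abs n
  simp [h0] at this

lemma ww_conj (n : ℕ) : (starRingEnd ℂ) (ww n) = (ww n)⁻¹ := by
  rw [← Complex.inv_eq_conj]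
  simp [ww_abs]

lemma ww_mul_conj (n t : ℕ) : ww n ^ t * (starRingEnd ℂ) (ww n ^ t) = 1 := by
  rw [Complex.mul_conj, Complex.normSq_eq_norm_sq]
  simp [map_pow, ww_abs]

lemma ww_pow_mod {n : ℕ} (hn : n ≠ 0) (a : ℕ) : ww n ^ a = ww n ^ (a % n) := by
  conv_lhs => rw [← Nat.mod_add_div a n]
  rw [pow_add, pow_mul, (ww_prim hn).pow_eq_one, one_pow, mul_one]

lemma ww_pow_eq_pow {n : ℕ} (hn : n ≠ 0) {a b : ℕ} (h : a % n = b % n) :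
    ww n ^ a = ww n ^ b := by
  rw [ww_pow_mod hn a, ww_pow_mod hn b, h]

/-- geometric sum over roots of unity -/
lemma ww_geom (x j s : ℕ) (hx : x ≠ 0) :
    ∑ k ∈ Finset.range x, ww x ^ (j * k) * (starRingEnd ℂ) (ww x ^ (s * k)) =
      if j % x = s % x then (x : ℂ) else 0 := by
  have hprim := ww_prim hx
  have hζ0 : ww x ≠ 0 := ww_ne_zero x
  set μ : ℂ := ww x ^ j * ((ww x) ^ s)⁻¹ with hμdef
  have hterm : ∀ k, ww x ^ (j * k) * (starRingEnd ℂ) (ww x ^ (s * k)) = μ ^ k := by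
    intro k
    rw [map_pow, ww_conj, hμdef, mul_pow, inv_pow, inv_pow, ← pow_mul, ← pow_mul]
  simp only [hterm]
  have hμx : μ ^ x = 1 := by
    rw [hμdef, mul_pow, inv_pow, ← pow_mul, ← pow_mul, mul_comm j x, mul_comm s x,
      pow_mul, pow_mul, hprim.pow_eq_one, one_pow, one_pow, inv_one, mul_one]
  by_cases h1 : j % x = s % x
  · have heq : ww x ^ j = ww x ^ s := ww_pow_eq_pow hx h1
    have hμ1 : μ = 1 := by
      rw [hμdef, heq, mul_inv_cancel₀ (pow_ne_zero _ hζ0)]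
    simp [hμ1, h1]
  · have hμ1 : μ ≠ 1 := by
      intro h
      apply h1
      have : ww x ^ j = ww x ^ s := by
        have := h
        rw [hμdef] at this
        field_simp at this
        exact this
      rw [ww_pow_mod hx j, ww_pow_mod hx s] at this
      exact hprim.pow_inj (Nat.mod_lt _ (Nat.pos_of_ne_zero hx))
        (Nat.mod_lt _ (Nat.pos_of_ne_zero hx)) this
    rw [geom_sum_eq hμ1, hμx, sub_self, zero_div, if_neg h1]

lemma ww_mul_pow {x y : ℕ} (hx : x ≠ 0) (hy : y ≠ 0) : ww (x * y) ^ y = ww x := by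
  rw [ww, ww, ← Complex.exp_nat_mul]
  congr 1
  have hx' : (x:ℂ) ≠ 0 := Nat.cast_ne_zero.mpr hx
  have hy' : (y:ℂ) ≠ 0 := Nat.cast_ne_zero.mpr hy
  push_cast
  field_simp

lemma psi_apply {d x y m s : ℕ} (hd : x * y = d) (hm : m < y) (t : Fin d) :
    psi d x y m s t = if (t : ℕ) % y = m
      then 1 / (Real.sqrt x : ℂ) * ww x ^ (s * ((t : ℕ) / y)) else 0 := by
  have hy : 0 < y := lt_of_le_of_lt (Nat.zero_le m) hm
  have ht : (t : ℕ) < x * y := hd ▸ t.isLt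
  rw [psi]
  by_cases h : (t : ℕ) % y = m
  · have hk0 : (t : ℕ) / y < x := Nat.div_lt_of_lt_mul (by rwa [mul_comm] at ht)
    have hcond : ∀ k, ((t : ℕ) = k * y + m) ↔ k = (t : ℕ) / y := by
      intro k
      constructor
      · intro hteq
        rw [hteq, add_comm, Nat.add_mul_div_right m k hy, Nat.div_eq_of_lt hm, zero_add]
      · rintro rfl
        conv_lhs => rw [← Nat.div_add_mod (t : ℕ) y, h]
        ring_nf
    simp only [hcond, mul_ite, mul_one, mul_zero, Finset.sum_ite_eq',
      Finset.mem_range, if_pos hk0, if_pos h]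
  · rw [if_neg h]
    have : ∀ k ∈ Finset.range x, ww x ^ (s * k) * (if (t:ℕ) = k * y + m then (1:ℂ) else 0) = 0 := by
      intro k _
      rw [if_neg, mul_zero]
      intro he
      exact h (by rw [he, add_comm, Nat.add_mul_mod_self_right, Nat.mod_eq_of_lt hm])
    rw [Finset.sum_eq_zero this, mul_zero]

lemma sum_resid {x y m : ℕ} (hm : m < y) (F : ℕ → ℂ) :
    ∑ l ∈ Finset.range (x * y), (if l % y = m then F l else 0) =
      ∑ k ∈ Finset.range x, F (k * y + m) := by
  have hy : 0 < y := lt_of_le_of_lt (Nat.zero_le m) hm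
  rw [← Finset.sum_filter]
  apply Finset.sum_bij' (fun l _ => l / y) (fun k _ => k * y + m)
  · intro l hl
    simp only [Finset.mem_filter, Finset.mem_range] at hl
    simp only [Finset.mem_range]
    have := hl.1
    rw [mul_comm] at this
    exact Nat.div_lt_of_lt_mul this
  · intro k hk
    simp only [Finset.mem_range] at hk
    simp only [Finset.mem_filter, Finset.mem_range]
    constructor
    · calc k * y + m < k * y + y := by omega
        _ = (k+1) * y := by ring
        _ ≤ x * y := Nat.mul_le_mul_right y hk
    · rw [add_comm, Nat.add_mul_mod_self_right, Nat.mod_eq_of_lt hm]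
  · intro l hl
    simp only [Finset.mem_filter, Finset.mem_range] at hl
    conv_rhs => rw [← Nat.div_add_mod l y, hl.2]
    ring_nf
  · intro k hk
    rw [add_comm, Nat.add_mul_div_right m k hy, Nat.div_eq_of_lt hm, zero_add]
  · intro l hl
    simp only [Finset.mem_filter, Finset.mem_range] at hl
    conv_lhs => rw [← Nat.div_add_mod l y, hl.2]
    ring_nf

/-- the inner product ∑_l conj(ψ l) * bvec j l -/
lemma psi_bvec_inner {d x y m s : ℕ} (hd : x * y = d) (hm : m < y) (hs : s < x) (j : Fin d) :
    ∑ l : Fin d, (starRingEnd ℂ) (psi d x y m s l) * bvec d (j : ℕ) l =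
      if (j : ℕ) % x = s then
        (x : ℂ) / ((Real.sqrt x : ℂ) * (Real.sqrt d : ℂ)) * ww d ^ (m * (j : ℕ)) else 0 := by
  have hx : 0 < x := lt_of_le_of_lt (Nat.zero_le s) hs
  have hy : 0 < y := lt_of_le_of_lt (Nat.zero_le m) hm
  set c : ℂ := 1 / (Real.sqrt x : ℂ) with hc
  have hstep : ∀ l : Fin d,
      (starRingEnd ℂ) (psi d x y m s l) * bvec d (j : ℕ) l =
      (fun l : ℕ => if l % y = m then
        (c * (starRingEnd ℂ) (ww x ^ (s * (l / y)))) * (ww d ^ (l * (j:ℕ)) / (Real.sqrt d : ℂ))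
        else 0) (l : ℕ) := by
    intro l
    rw [psi_apply hd hm, bvec]
    beta_reduce
    by_cases h : (l : ℕ) % y = m
    · rw [if_pos h, if_pos h, map_mul]
      have : (starRingEnd ℂ) c = c := by
        rw [hc]
        simp [Complex.conj_ofReal]
      rw [this]
    · rw [if_neg h, if_neg h, map_zero, zero_mul]
  have h1 : ∑ l : Fin d, (starRingEnd ℂ) (psi d x y m s l) * bvec d (j : ℕ) l =
      ∑ l ∈ Finset.range d, (fun l : ℕ => if l % y = m then
        (c * (starRingEnd ℂ) (ww x ^ (s * (l / y)))) * (ww d ^ (l * (j:ℕ)) / (Real.sqrt d : ℂ))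
        else 0) l := by
    rw [← Fin.sum_univ_eq_sum_range]
    exact Finset.sum_congr rfl (fun l _ => hstep l)
  rw [h1]
  beta_reduce
  subst hd
  rw [sum_resid hm]
  have hdiv : ∀ k : ℕ, (k * y + m) / y = k := by
    intro k
    rw [add_comm, Nat.add_mul_div_right m k hy, Nat.div_eq_of_lt hm, zero_add]
  have hmod : ∀ k : ℕ, (k * y + m) % y = m := by
    intro k
    rw [add_comm, Nat.add_mul_mod_self_right, Nat.mod_eq_of_lt hm]
  have hterm : ∀ k ∈ Finset.range x,
      (c * (starRingEnd ℂ) (ww x ^ (s * ((k * y + m) / y)))) *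
        (ww (x*y) ^ ((k * y + m) * (j:ℕ)) / (Real.sqrt ((x*y : ℕ) : ℝ) : ℂ)) =
      (c / (Real.sqrt ((x*y : ℕ) : ℝ) : ℂ) * ww (x*y) ^ (m * (j:ℕ))) *
        (ww x ^ ((j:ℕ) * k) * (starRingEnd ℂ) (ww x ^ (s * k))) := by
    intro k _
    rw [hdiv k]
    have he : (k * y + m) * (j:ℕ) = y * (k * (j:ℕ)) + m * (j:ℕ) := by ring
    rw [he, pow_add]
    have hww : ww (x*y) ^ (y * (k * (j:ℕ))) = ww x ^ ((j:ℕ) * k) := by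
      rw [pow_mul, ww_mul_pow hx.ne' hy.ne', mul_comm k (j:ℕ)]
    rw [hww]
    ring
  rw [Finset.sum_congr rfl hterm, ← Finset.mul_sum, ww_geom x (j:ℕ) s hx.ne',
    Nat.mod_eq_of_lt hs]
  by_cases h : (j : ℕ) % x = s
  · rw [if_pos h, if_pos h, hc]
    have hsx : (Real.sqrt x : ℂ) ≠ 0 := by
      simp only [ne_eq, Complex.ofReal_eq_zero]
      positivity
    have hsd : (Real.sqrt (x*y) : ℂ) ≠ 0 := by
      simp only [ne_eq, Complex.ofReal_eq_zero]
      positivity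
    field_simp
  · rw [if_neg h, if_neg h, mul_zero]

lemma kd_key : ∀ A A' B B' sx sd X D : ℂ, A * A' = 1 → B * B' = 1 → sx * sx = X →
    sd * sd = D → X ≠ 0 → D ≠ 0 →
    (1 / sx * A) * (X / (sx * sd) * B) * (A' * B' / sd) = 1 / D := by
  intro A A' B B' sx sd X D hA hB hsx hsd hX hD
  have hsx0 : sx ≠ 0 := by
    intro h
    apply hX
    rw [← hsx, h, mul_zero]
  have hsd0 : sd ≠ 0 := by
    intro h
    apply hD
    rw [← hsd, h, mul_zero]
  have : (1 / sx * A) * (X / (sx * sd) * B) * (A' * B' / sd) =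
      (A * A') * (B * B') * (X / ((sx * sx) * (sd * sd))) := by
    field_simp
  rw [this, hA, hB, hsx, hsd, one_mul, one_mul, div_mul_eq_div_div, div_self hX]

lemma KD_proj {d x y m s : ℕ} (hd : x * y = d) (hm : m < y) (hs : s < x) (i j : Fin d) :
    KD (proj (psi d x y m s)) i j =
      if ((i : ℕ) % y = m ∧ (j : ℕ) % x = s) then (1 / (d:ℂ)) else 0 := by
  have hx : 0 < x := lt_of_le_of_lt (Nat.zero_le s) hs
  have hy : 0 < y := lt_of_le_of_lt (Nat.zero_le m) hm
  have hd0 : 0 < d := hd ▸ Nat.mul_pos hx hy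
  have hfac : KD (proj (psi d x y m s)) i j =
      psi d x y m s i * (∑ l : Fin d, (starRingEnd ℂ) (psi d x y m s l) * bvec d (j:ℕ) l) *
        (starRingEnd ℂ) (bvec d (j : ℕ) i) := by
    rw [KD, Finset.mul_sum]
    congr 1
    apply Finset.sum_congr rfl
    intro l _
    rw [proj]
    ring
  rw [hfac, psi_bvec_inner hd hm hs, psi_apply hd hm]
  by_cases h1 : (i : ℕ) % y = m
  · by_cases h2 : (j : ℕ) % x = s
    · rw [if_pos h1, if_pos h2, if_pos ⟨h1, h2⟩]
      rw [bvec, map_div₀, Complex.conj_ofReal]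
      set k0 := (i : ℕ) / y with hk0
      have hi : (i : ℕ) = k0 * y + m := by
        rw [hk0]
        conv_lhs => rw [← Nat.div_add_mod (i : ℕ) y, h1]
        ring_nf
      have hiexp : (i:ℕ) * (j:ℕ) = y * (k0 * (j:ℕ)) + m * (j:ℕ) := by rw [hi]; ring
      subst hd
      have hww : ww (x*y) ^ ((i:ℕ) * (j:ℕ)) =
          ww x ^ (s * k0) * ww (x*y) ^ (m * (j:ℕ)) := by
        rw [hiexp, pow_add, pow_mul, ww_mul_pow hx.ne' hy.ne']
        congr 1
        have hmodeq : (k0 * (j:ℕ)) % x = (s * k0) % x := by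
          have : (j:ℕ) % x = s % x := by rw [h2, Nat.mod_eq_of_lt hs]
          calc (k0 * (j:ℕ)) % x = ((j:ℕ) * k0) % x := by rw [mul_comm]
            _ = (s * k0) % x := Nat.ModEq.mul_right k0 this
        exact ww_pow_eq_pow hx.ne' hmodeq
      rw [hww, map_mul]
      have e1 : ww x ^ (s * k0) * (starRingEnd ℂ) (ww x ^ (s * k0)) = 1 := ww_mul_conj x _
      have e2 : ww (x*y) ^ (m * (j:ℕ)) * (starRingEnd ℂ) (ww (x*y) ^ (m * (j:ℕ))) = 1 :=
        ww_mul_conj (x*y) _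
      have hsx2 : ((Real.sqrt x : ℝ) : ℂ) * ((Real.sqrt x : ℝ) : ℂ) = (x : ℂ) := by
        rw [← Complex.ofReal_mul, Real.mul_self_sqrt (Nat.cast_nonneg x)]
        simp
      have hsd2 : ((Real.sqrt (((x*y : ℕ) : ℝ)) : ℝ) : ℂ) * ((Real.sqrt (((x*y : ℕ) : ℝ)) : ℝ) : ℂ)
          = ((x*y : ℕ) : ℂ) := by
        rw [← Complex.ofReal_mul, Real.mul_self_sqrt (Nat.cast_nonneg (x*y))]
        simp
      have hxC : (x : ℂ) ≠ 0 := Nat.cast_ne_zero.mpr hx.ne'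
      have hdC : ((x*y : ℕ) : ℂ) ≠ 0 := Nat.cast_ne_zero.mpr hd0.ne'
      exact kd_key _ _ _ _ _ _ _ _ e1 e2 hsx2 hsd2 hxC hdC
    · rw [if_neg h2, if_neg (by tauto : ¬((i:ℕ) % y = m ∧ (j:ℕ) % x = s))]
      ring
  · rw [if_neg h1, if_neg (by tauto : ¬((i:ℕ) % y = m ∧ (j:ℕ) % x = s))]
    ring

lemma trace_proj {d x y m s : ℕ} (hd : x * y = d) (hm : m < y) (hs : s < x) :
    (proj (psi d x y m s)).trace = 1 := by
  have hx : 0 < x := lt_of_le_of_lt (Nat.zero_le s) hs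
  have hxC : (x : ℂ) ≠ 0 := Nat.cast_ne_zero.mpr hx.ne'
  have hterm : ∀ i : Fin d, proj (psi d x y m s) i i =
      (fun i : ℕ => if i % y = m then 1 / (x:ℂ) else 0) (i : ℕ) := by
    intro i
    rw [proj, psi_apply hd hm]
    beta_reduce
    by_cases h : (i : ℕ) % y = m
    · rw [if_pos h, if_pos h, map_mul, map_div₀, Complex.conj_ofReal, map_one]
      have e1 : ww x ^ (s * ((i:ℕ)/y)) * (starRingEnd ℂ) (ww x ^ (s * ((i:ℕ)/y))) = 1 :=
        ww_mul_conj x _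
      have hsx2 : ((Real.sqrt x : ℝ) : ℂ) * ((Real.sqrt x : ℝ) : ℂ) = (x : ℂ) := by
        rw [← Complex.ofReal_mul, Real.mul_self_sqrt (Nat.cast_nonneg x)]
        simp
      have hsx0 : ((Real.sqrt x : ℝ) : ℂ) ≠ 0 := by
        intro h0
        rw [h0, mul_zero] at hsx2
        exact hxC hsx2.symm
      have e1' : ww x ^ (s * ((i:ℕ)/y)) * (starRingEnd ℂ) (ww x) ^ (s * ((i:ℕ)/y)) = 1 := by
        rw [← map_pow]
        exact e1
      field_simp
      rw [e1, one_mul, sq, hsx2]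
    · rw [if_neg h, if_neg h, map_zero, mul_zero]
  rw [Matrix.trace]
  have h1 : ∑ i : Fin d, (proj (psi d x y m s)).diag i =
      ∑ i ∈ Finset.range d, (fun i : ℕ => if i % y = m then 1 / (x:ℂ) else 0) i := by
    rw [← Fin.sum_univ_eq_sum_range]
    exact Finset.sum_congr rfl (fun i _ => hterm i)
  rw [h1]
  subst hd
  rw [sum_resid hm fun _ => 1 / (x:ℂ), Finset.sum_const, Finset.card_range]
  rw [nsmul_eq_mul, mul_one_div, div_self hxC]

lemma proj_posSemidef {d : ℕ} (v : Fin d → ℂ) : (proj v).PosSemidef := by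
  rw [Matrix.posSemidef_iff_dotProduct_mulVec]
  constructor
  · ext i j
    simp [Matrix.IsHermitian, proj, Matrix.conjTranspose_apply, mul_comm]
  · intro z
    have : (Matrix.mulVec (proj v) z) = fun i => v i * ∑ l, (starRingEnd ℂ) (v l) * z l := by
      funext i
      rw [Matrix.mulVec, dotProduct]
      simp only [proj]
      rw [Finset.mul_sum]
      exact Finset.sum_congr rfl fun l _ => by ring
    rw [this, dotProduct]
    set w := ∑ l, (starRingEnd ℂ) (v l) * z l with hw
    have h2 : ∑ i, star z i * (v i * w) = star w * w := by
      have hs1 : ∀ i ∈ Finset.univ, star z i * (v i * w) = (star z i * v i) * w :=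
        fun i _ => by ring
      rw [Finset.sum_congr rfl hs1, ← Finset.sum_mul]
      congr 1
      rw [hw, star_sum]
      apply Finset.sum_congr rfl
      intro i _
      rw [star_mul]
      simp
    rw [h2]
    exact star_mul_self_nonneg w

noncomputable def Bmat (d : ℕ) : Matrix (Fin d) (Fin d) ℂ :=
  Matrix.of fun l j : Fin d => bvec d (j : ℕ) l

lemma KD_eq_mul {d : ℕ} (ρ : Matrix (Fin d) (Fin d) ℂ) (i j : Fin d) :
    KD ρ i j = (ρ * Bmat d) i j * (starRingEnd ℂ) (bvec d (j : ℕ) i) := by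
  rw [KD, Matrix.mul_apply]
  rfl

lemma bvec_ne_zero {d : ℕ} (hd : d ≠ 0) (j i : Fin d) : bvec d (j : ℕ) i ≠ 0 := by
  rw [bvec]
  apply div_ne_zero (pow_ne_zero _ (ww_ne_zero d))
  simp only [ne_eq, Complex.ofReal_eq_zero]
  positivity

lemma Bmat_det_isUnit {d : ℕ} (hd : d ≠ 0) : IsUnit (Bmat d).det := by
  have hprim := ww_prim hd
  have hB : Bmat d = (((Real.sqrt d : ℝ) : ℂ))⁻¹ •
      Matrix.vandermonde (fun l : Fin d => ww d ^ (l : ℕ)) := by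
    ext l j
    simp only [Bmat, Matrix.of_apply, Matrix.smul_apply, Matrix.vandermonde, bvec, smul_eq_mul]
    rw [← pow_mul]
    field_simp
  rw [hB, Matrix.det_smul]
  apply IsUnit.mul
  · apply IsUnit.pow
    simp only [isUnit_iff_ne_zero, ne_eq, inv_eq_zero, Complex.ofReal_eq_zero]
    positivity
  · rw [Matrix.det_vandermonde, isUnit_iff_ne_zero]
    apply Finset.prod_ne_zero_iff.mpr
    intro i _
    apply Finset.prod_ne_zero_iff.mpr
    intro j hj
    rw [Finset.mem_Ioi] at hj
    apply sub_ne_zero_of_ne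
    intro heq
    exact absurd (hprim.pow_inj j.isLt i.isLt heq) (by omega : ¬ (j:ℕ) = (i:ℕ))

lemma KD_inj {d : ℕ} (hd : d ≠ 0) (ρ σ : Matrix (Fin d) (Fin d) ℂ)
    (h : ∀ i j, KD ρ i j = KD σ i j) : ρ = σ := by
  have hB : ρ * Bmat d = σ * Bmat d := by
    ext i j
    have := h i j
    rw [KD_eq_mul, KD_eq_mul] at this
    exact mul_right_cancel₀ (by
      simpa using (bvec_ne_zero hd j i)) this
  have hdet := Bmat_det_isUnit hd
  calc ρ = ρ * (Bmat d * (Bmat d)⁻¹) := by rw [Matrix.mul_nonsing_inv _ hdet, Matrix.mul_one]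
    _ = (ρ * Bmat d) * (Bmat d)⁻¹ := by rw [Matrix.mul_assoc]
    _ = (σ * Bmat d) * (Bmat d)⁻¹ := by rw [hB]
    _ = σ * (Bmat d * (Bmat d)⁻¹) := by rw [Matrix.mul_assoc]
    _ = σ := by rw [Matrix.mul_nonsing_inv _ hdet, Matrix.mul_one]


/-- sum of level functions -/
def Fg (p r : ℕ) (g : ℕ → ℕ → ℕ → ℝ) (i j : ℕ) : ℝ :=
  ∑ a ∈ Finset.range (r + 1), g a (i % p ^ (r - a)) (j % p ^ a)

lemma Fg_congr_left (p r : ℕ) (g : ℕ → ℕ → ℕ → ℝ) {i i' : ℕ} (j : ℕ)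
    (h : i % p ^ r = i' % p ^ r) : Fg p r g i j = Fg p r g i' j := by
  unfold Fg
  apply Finset.sum_congr rfl
  intro a _
  have hdvd : p ^ (r - a) ∣ p ^ r := pow_dvd_pow p (Nat.sub_le r a)
  rw [← Nat.mod_mod_of_dvd i hdvd, h, Nat.mod_mod_of_dvd i' hdvd]

lemma Fg_mod (p r : ℕ) (g : ℕ → ℕ → ℕ → ℝ) (i j : ℕ) :
    Fg p r g i j = Fg p r g (i % p ^ r) (j % p ^ r) := by
  have h1 : Fg p r g i j = Fg p r g (i % p ^ r) j :=
    Fg_congr_left p r g j (Nat.mod_mod_of_dvd i dvd_rfl).symm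
  rw [h1]
  unfold Fg
  apply Finset.sum_congr rfl
  intro a ha
  rw [Finset.mem_range] at ha
  have hdvd : p ^ a ∣ p ^ r := pow_dvd_pow p (by omega)
  rw [Nat.mod_mod_of_dvd j hdvd]

lemma modstep {p : ℕ} (hp : 0 < p) (c j' a : ℕ) (hc : c < p) :
    (c + p * j') % p ^ (a + 1) = c + p * (j' % p ^ a) := by
  have h1 : p ^ (a+1) = p * p ^ a := by ring
  rw [h1, Nat.mod_mul]
  congr 1
  · rw [Nat.add_mul_mod_self_left, Nat.mod_eq_of_lt hc]
  · congr 1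
    rw [Nat.add_mul_div_left _ _ hp, Nat.div_eq_of_lt hc, zero_add]

lemma divstep {p : ℕ} (hp : 0 < p) (j a : ℕ) :
    (j % p ^ (a + 1)) / p = (j / p) % p ^ a := by
  have h1 : p ^ (a+1) = p * p ^ a := by ring
  rw [h1, Nat.mod_mul, Nat.add_mul_div_left _ _ hp,
    Nat.div_eq_of_lt (Nat.mod_lt _ hp), zero_add]

/-- Key combinatorial lemma: a pointwise-nonnegative real combination of the level
indicator structure can be rewritten with nonnegative coefficients. -/
lemma L2 (p : ℕ) (hp : 1 < p) :
    ∀ r (g : ℕ → ℕ → ℕ → ℝ), (∀ i j, 0 ≤ Fg p r g i j) →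
      ∃ g' : ℕ → ℕ → ℕ → ℝ, (∀ a m s, 0 ≤ g' a m s) ∧ ∀ i j, Fg p r g' i j = Fg p r g i j := by
  have hp0 : 0 < p := by omega
  intro r
  induction r with
  | zero =>
    intro g hg
    refine ⟨fun _ _ _ => g 0 0 0, fun a m s => ?_, fun i j => ?_⟩
    · have := hg 0 0
      simpa [Fg] using this
    · simp [Fg, Nat.mod_one]
  | succ r IH =>
    intro g hg
    have hpr : 0 < p ^ r := pow_pos hp0 r
    have hpr1 : 0 < p ^ (r+1) := pow_pos hp0 _
    set G : ℕ → ℝ := fun i' => (Finset.range p).inf'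
      (Finset.nonempty_range_iff.mpr (by omega)) (fun t => g 0 (i' % p ^ r + p ^ r * t) 0)
      with hG
    have key1 : ∀ i, G (i % p ^ r) ≤ g 0 (i % p ^ (r+1)) 0 := by
      intro i
      have hmm : (i % p ^ r) % p ^ r = i % p ^ r := Nat.mod_mod_of_dvd _ dvd_rfl
      have hsplit : i % p ^ (r+1) = (i % p ^ r) % p ^ r + p ^ r * (i % p ^ (r+1) / p ^ r) := by
        rw [hmm]
        have h2 : i % p ^ (r+1) % p ^ r = i % p ^ r := by
          rw [Nat.mod_mod_of_dvd _ (pow_dvd_pow p (by omega))]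
        conv_lhs => rw [← Nat.div_add_mod (i % p ^ (r+1)) (p ^ r)]
        rw [h2]
        ring
      have ht : i % p ^ (r+1) / p ^ r < p := by
        apply Nat.div_lt_of_lt_mul
        calc i % p ^ (r+1) < p ^ (r+1) := Nat.mod_lt _ hpr1
          _ = p ^ r * p := by ring
      calc G (i % p ^ r) ≤ g 0 ((i % p ^ r) % p ^ r + p ^ r * (i % p ^ (r+1) / p ^ r)) 0 :=
            Finset.inf'_le _ (Finset.mem_range.mpr ht)
        _ = g 0 (i % p ^ (r+1)) 0 := by rw [← hsplit]
    have key2 : ∀ i', ∃ t ∈ Finset.range p, G i' = g 0 (i' % p ^ r + p ^ r * t) 0 :=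
      fun i' => Finset.exists_mem_eq_inf' _ _
    set h : ℕ → ℕ → ℕ → ℕ → ℝ := fun c =>
      if c < p then (fun a m s => g (a+1) m (c + p * s) + (if a = 0 then G m else 0))
      else (fun _ _ _ => 0) with hh
    have decomp : ∀ i j' c, c < p →
        Fg p (r+1) g i (c + p * j') =
          (g 0 (i % p ^ (r+1)) 0 - G (i % p ^ r)) + Fg p r (h c) i j' := by
      intro i j' c hc
      have hL : Fg p (r+1) g i (c + p * j') = g 0 (i % p ^ (r+1)) 0 +
          ∑ a ∈ Finset.range (r+1), g (a+1) (i % p ^ (r-a)) (c + p * (j' % p ^ a)) := by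
        rw [Fg, Finset.sum_range_succ']
        rw [add_comm]
        congr 1
        · rw [Nat.sub_zero, pow_zero, Nat.mod_one]
        · apply Finset.sum_congr rfl
          intro a _
          rw [Nat.succ_sub_succ, modstep hp0 _ _ _ hc]
      have hR : Fg p r (h c) i j' =
          (∑ a ∈ Finset.range (r+1), g (a+1) (i % p ^ (r-a)) (c + p * (j' % p ^ a))) +
            G (i % p ^ r) := by
        have hexp : ∀ a, h c a (i % p ^ (r-a)) (j' % p ^ a) =
            g (a+1) (i % p ^ (r-a)) (c + p * (j' % p ^ a)) +
              (if a = 0 then G (i % p ^ (r-a)) else 0) := by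
          intro a
          simp only [hh, if_pos hc]
        rw [Fg, Finset.sum_congr rfl (fun a _ => hexp a), Finset.sum_add_distrib]
        congr 1
        rw [Finset.sum_ite_eq' (Finset.range (r+1)) 0 (fun a => G (i % p ^ (r-a))),
          if_pos (Finset.mem_range.mpr (by omega))]
        rw [Nat.sub_zero]
      rw [hL, hR]
      ring
    have hposc : ∀ c i j', 0 ≤ Fg p r (h c) i j' := by
      intro c i j'
      by_cases hc : c < p
      · obtain ⟨t, hts, hGt⟩ := key2 (i % p ^ r)
        rw [Finset.mem_range] at hts
        set istar := i % p ^ r + p ^ r * t with histar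
        have hstarlt : istar < p ^ (r+1) := by
          have h1 : i % p ^ r < p ^ r := Nat.mod_lt _ hpr
          calc istar < p ^ r + p ^ r * t := by omega
            _ = p ^ r * (t + 1) := by ring
            _ ≤ p ^ r * p := Nat.mul_le_mul_left _ (by omega)
            _ = p ^ (r+1) := by ring
        have h1 : istar % p ^ (r+1) = istar := Nat.mod_eq_of_lt hstarlt
        have h2 : istar % p ^ r = i % p ^ r := by
          rw [histar, Nat.add_mul_mod_self_left, Nat.mod_mod_of_dvd _ dvd_rfl]
        have hGi : G (i % p ^ r) = g 0 istar 0 := by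
          rw [hGt, histar, Nat.mod_mod_of_dvd _ dvd_rfl]
        have hcongr : Fg p r (h c) i j' = Fg p r (h c) istar j' :=
          Fg_congr_left p r (h c) j' h2.symm
        have hd := decomp istar j' c hc
        rw [h1, h2, hGi, sub_self, zero_add] at hd
        rw [hcongr, ← hd]
        exact hg istar (c + p * j')
      · have : h c = fun _ _ _ => 0 := by
          simp only [hh]
          rw [if_neg hc]
        rw [this]
        simp [Fg]
    have choice : ∀ c, ∃ h', (∀ a m s, 0 ≤ h' a m s) ∧
        ∀ i j, Fg p r h' i j = Fg p r (h c) i j :=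
      fun c => IH (h c) (hposc c)
    choose h' h'pos h'eq using choice
    refine ⟨fun a m s => if a = 0 then g 0 (m % p ^ (r+1)) 0 - G (m % p ^ r)
      else h' (s % p) (a-1) m (s / p), fun a m s => ?_, fun i j => ?_⟩
    · beta_reduce
      by_cases ha : a = 0
      · rw [if_pos ha]
        exact sub_nonneg.mpr (key1 m)
      · rw [if_neg ha]
        exact h'pos _ _ _ _
    · set c := j % p with hc
      have hcp : c < p := Nat.mod_lt _ hp0
      have hmain : Fg p (r+1) (fun a m s => if a = 0 then g 0 (m % p ^ (r+1)) 0 - G (m % p ^ r)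
          else h' (s % p) (a-1) m (s / p)) i j =
          (g 0 (i % p ^ (r+1)) 0 - G (i % p ^ r)) + Fg p r (h' c) i (j / p) := by
        rw [Fg, Finset.sum_range_succ', add_comm]
        congr 1
        · -- the a = 0 term
          simp only [Nat.sub_zero, pow_zero, Nat.mod_one, eq_self_iff_true, if_true]
          rw [Nat.mod_mod_of_dvd _ dvd_rfl,
            Nat.mod_mod_of_dvd _ (pow_dvd_pow p (by omega : r ≤ r + 1))]
        · -- the higher terms
          rw [Fg]
          apply Finset.sum_congr rfl
          intro a _
          have hne : ¬ (a + 1 = 0) := by omega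
          rw [if_neg hne]
          have e1 : (j % p ^ (a+1)) % p = c := by
            rw [hc, Nat.mod_mod_of_dvd _ (dvd_pow_self p (by omega : a + 1 ≠ 0))]
          have e2 : (j % p ^ (a+1)) / p = (j / p) % p ^ a := divstep hp0 j a
          rw [e1, e2]
          simp only [Nat.sub_zero, Nat.succ_sub_succ]
      rw [hmain, h'eq c]
      have hd := decomp i (j / p) c hcp
      have hj : c + p * (j / p) = j := by
        rw [hc, Nat.mod_add_div]
      rw [hj] at hd
      linarith [hd]


/-- KD as an ℝ-linear map in ρ, for fixed (i,j). -/
noncomputable def KDlin (d : ℕ) (i j : Fin d) : Matrix (Fin d) (Fin d) ℂ →ₗ[ℝ] ℂ where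
  toFun ρ := KD ρ i j
  map_add' a b := by
    simp only [KD, Matrix.add_apply, add_mul, Finset.sum_add_distrib]
    try ring
  map_smul' c a := by
    simp only [KD, Matrix.smul_apply, RingHom.id_apply, Complex.real_smul]
    have h : (∑ x : Fin d, (c:ℂ) * a i x * bvec d (j:ℕ) x) =
        (c:ℂ) * ∑ x : Fin d, a i x * bvec d (j:ℕ) x := by
      rw [Finset.mul_sum]
      exact Finset.sum_congr rfl fun _ _ => by ring
    rw [h]
    ring

lemma KD_sum_smul {d : ℕ} {ι : Type*} (T : Finset ι) (c : ι → ℝ)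
    (M : ι → Matrix (Fin d) (Fin d) ℂ) (i j : Fin d) :
    KD (∑ t ∈ T, c t • M t) i j = ∑ t ∈ T, ((c t : ℂ) * KD (M t) i j) := by
  have h1 : KD (∑ t ∈ T, c t • M t) i j = KDlin d i j (∑ t ∈ T, c t • M t) := rfl
  rw [h1, map_sum]
  apply Finset.sum_congr rfl
  intro t _
  rw [map_smul]
  rw [Complex.real_smul]
  rfl

lemma sumCollapseKD {M S : ℕ} (f : ℕ → ℕ → ℝ) (m0 s0 : ℕ) (hm0 : m0 < M) (hs0 : s0 < S) :
    ∑ q ∈ (Finset.range M ×ˢ Finset.range S),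
      (if m0 = q.1 ∧ s0 = q.2 then f q.1 q.2 else 0) = f m0 s0 := by
  rw [Finset.sum_product]
  have hinner : ∀ m, ∑ s ∈ Finset.range S, (if m0 = m ∧ s0 = s then f m s else 0)
      = if m = m0 then f m0 s0 else 0 := by
    intro m
    by_cases hm : m = m0
    · subst hm
      rw [if_pos rfl]
      have : ∀ s ∈ Finset.range S, (if m = m ∧ s0 = s then f m s else 0)
          = if s = s0 then f m s0 else 0 := by
        intro s _
        by_cases hs : s = s0
        · subst hs
          simp
        · rw [if_neg hs, if_neg (by tauto)]
      rw [Finset.sum_congr rfl this, Finset.sum_ite_eq' (Finset.range S) s0,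
        if_pos (Finset.mem_range.mpr hs0)]
    · rw [if_neg hm]
      apply Finset.sum_eq_zero
      intro s _
      rw [if_neg (by tauto)]
  rw [Finset.sum_congr rfl (fun m _ => hinner m), Finset.sum_ite_eq' (Finset.range M) m0,
    if_pos (Finset.mem_range.mpr hm0)]

lemma ofReal_div_nonneg {a : ℝ} (d : ℕ) (ha : 0 ≤ a) : (0:ℂ) ≤ ((a / d : ℝ) : ℂ) :=
  Complex.zero_le_real.mpr (div_nonneg ha (Nat.cast_nonneg d))



lemma posSemidef_smul_real {d : ℕ} {ρ : Matrix (Fin d) (Fin d) ℂ} (h : ρ.PosSemidef)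
    {a : ℝ} (ha : 0 ≤ a) : (a • ρ).PosSemidef := by
  rw [Matrix.posSemidef_iff_dotProduct_mulVec] at h ⊢
  constructor
  · show Matrix.conjTranspose (a • ρ) = a • ρ
    rw [Matrix.conjTranspose_smul, star_trivial, h.1]
  · intro z
    have h2 := h.2 z
    have he : dotProduct (star z) ((a • ρ).mulVec z) =
        a • (dotProduct (star z) (ρ.mulVec z)) := by
      rw [Matrix.smul_mulVec, dotProduct_smul]
    rw [he, Complex.real_smul]
    exact mul_nonneg (Complex.zero_le_real.mpr ha) h2

/-- Lemma 2: for d = p^r, the KD-classical states lying in the real span of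
    the KD-classical pure-state projections are exactly the convex hull of those
    projections. -/
theorem kd_classical_inter_span_eq_convexHull (p r : ℕ) (hp : p.Prime) (hr : 0 < r) :
    {ρ : Matrix (Fin (p ^ r)) (Fin (p ^ r)) ℂ |
        ρ.PosSemidef ∧ ρ.trace = 1 ∧ ∀ i j, 0 ≤ KD ρ i j}
      ∩ (Submodule.span ℝ (pureKD (p ^ r)) : Set (Matrix (Fin (p ^ r)) (Fin (p ^ r)) ℂ))
    = convexHull ℝ (pureKD (p ^ r)) := by
  have hd0 : 0 < p ^ r := pow_pos hp.pos r
  have hp1 : 1 < p := hp.one_lt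
  apply Set.Subset.antisymm
  · -- hard direction
    rintro ρ ⟨⟨hpsd, htr, hKD⟩, hspan⟩
    obtain ⟨n, cf, vf, hsum⟩ := Submodule.mem_span_set'.mp hspan
    have hdec : ∀ t : Fin n, ∃ a m s : ℕ, a ≤ r ∧ m < p ^ (r - a) ∧ s < p ^ a ∧
        (vf t : Matrix (Fin (p ^ r)) (Fin (p ^ r)) ℂ) =
          proj (psi (p ^ r) (p ^ a) (p ^ (r - a)) m s) := by
      intro t
      obtain ⟨x, y, m, s, hxy, hm, hs, hM⟩ := (vf t).2
      have hxdvd : x ∣ p ^ r := Dvd.intro y hxy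
      obtain ⟨a, har, hxa⟩ := (Nat.dvd_prime_pow hp).mp hxdvd
      have hy : y = p ^ (r - a) := by
        have h1 : p ^ a * y = p ^ r := by rw [← hxa]; exact hxy
        have h2 : p ^ a * p ^ (r - a) = p ^ r := by
          rw [← pow_add]
          congr 1
          omega
        exact Nat.eq_of_mul_eq_mul_left (pow_pos hp.pos a) (h1.trans h2.symm)
      refine ⟨a, m, s, har, hy ▸ hm, hxa ▸ hs, ?_⟩
      rw [hM, hxa, ← hy]
    choose af mf sf har hmf hsf hvf using hdec
    have hpow : ∀ a : ℕ, a ≤ r → p ^ a * p ^ (r - a) = p ^ r := by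
      intro a ha
      rw [← pow_add]
      congr 1
      omega
    set g : ℕ → ℕ → ℕ → ℝ := fun a m s =>
      ∑ t : Fin n, (if af t = a ∧ mf t = m ∧ sf t = s then cf t else 0) with hgdef
    -- KD of ρ in terms of Fg
    have hKDv : ∀ (t : Fin n) (i j : Fin (p ^ r)),
        KD (vf t : Matrix (Fin (p ^ r)) (Fin (p ^ r)) ℂ) i j =
          if ((i:ℕ) % p ^ (r - af t) = mf t ∧ (j:ℕ) % p ^ (af t) = sf t)
            then 1 / ((p ^ r : ℕ) : ℂ) else 0 := by
      intro t i j
      rw [hvf t]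
      exact KD_proj (hpow (af t) (har t)) (hmf t) (hsf t) i j
    have hFgrep : ∀ i j : Fin (p ^ r), Fg p r g (i:ℕ) (j:ℕ) = ∑ t : Fin n,
        (if ((i:ℕ) % p ^ (r - af t) = mf t ∧ (j:ℕ) % p ^ (af t) = sf t)
          then cf t else 0) := by
      intro i j
      rw [Fg]
      have hterm : ∀ a ∈ Finset.range (r+1), g a ((i:ℕ) % p ^ (r - a)) ((j:ℕ) % p ^ a) =
          ∑ t : Fin n, (if af t = a ∧ mf t = (i:ℕ) % p ^ (r - a) ∧ sf t = (j:ℕ) % p ^ a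
            then cf t else 0) := fun a _ => rfl
      rw [Finset.sum_congr rfl hterm, Finset.sum_comm]
      apply Finset.sum_congr rfl
      intro t _
      rw [Finset.sum_eq_single (af t)]
      · by_cases hcond : (i:ℕ) % p ^ (r - af t) = mf t ∧ (j:ℕ) % p ^ (af t) = sf t
        · rw [if_pos ⟨rfl, hcond.1.symm, hcond.2.symm⟩, if_pos hcond]
        · rw [if_neg (by tauto), if_neg hcond]
      · intro a _ hne
        rw [if_neg (by tauto)]
      · intro habs
        exact absurd (Finset.mem_range.mpr (by have := har t; omega)) habs
    have hKDF : ∀ i j : Fin (p ^ r), KD ρ i j =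
        ((Fg p r g (i:ℕ) (j:ℕ) / (p ^ r : ℕ) : ℝ) : ℂ) := by
      intro i j
      have h1 : KD ρ i j = ∑ t : Fin n,
          ((cf t : ℂ) * KD (vf t : Matrix (Fin (p ^ r)) (Fin (p ^ r)) ℂ) i j) := by
        rw [← hsum]
        exact KD_sum_smul Finset.univ cf (fun t => (vf t : Matrix (Fin (p ^ r)) (Fin (p ^ r)) ℂ)) i j
      rw [h1, hFgrep i j]
      push_cast
      rw [Finset.sum_div]
      apply Finset.sum_congr rfl
      intro t _
      rw [hKDv t i j]
      by_cases hcond : (i:ℕ) % p ^ (r - af t) = mf t ∧ (j:ℕ) % p ^ (af t) = sf t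
      · rw [if_pos hcond, if_pos hcond]
        push_cast
        ring
      · rw [if_neg hcond, if_neg hcond]
        push_cast
        ring
    -- positivity of Fg
    have hFgpos : ∀ i j : ℕ, 0 ≤ Fg p r g i j := by
      intro i j
      set i' : Fin (p ^ r) := ⟨i % p ^ r, Nat.mod_lt _ hd0⟩
      set j' : Fin (p ^ r) := ⟨j % p ^ r, Nat.mod_lt _ hd0⟩
      have h1 := hKD i' j'
      rw [hKDF i' j'] at h1
      have h2 : 0 ≤ Fg p r g (i % p ^ r) (j % p ^ r) / ((p ^ r : ℕ) : ℝ) :=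
        Complex.zero_le_real.mp h1
      have h3 : 0 ≤ Fg p r g (i % p ^ r) (j % p ^ r) := by
        by_contra hneg
        push_neg at hneg
        have : Fg p r g (i % p ^ r) (j % p ^ r) / ((p ^ r : ℕ) : ℝ) < 0 :=
          div_neg_of_neg_of_pos hneg (by exact_mod_cast hd0)
        linarith
      rw [Fg_mod]
      exact h3
    obtain ⟨g', hg'pos, hg'eq⟩ := L2 p hp1 r g hFgpos
    -- build σ
    set Δ : Finset ((_ : ℕ) × ℕ × ℕ) := (Finset.range (r+1)).sigma
        (fun a => (Finset.range (p ^ (r - a))) ×ˢ (Finset.range (p ^ a))) with hΔ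
    set w : ((_ : ℕ) × ℕ × ℕ) → ℝ := fun t => g' t.1 t.2.1 t.2.2 with hw
    set P : ((_ : ℕ) × ℕ × ℕ) → Matrix (Fin (p ^ r)) (Fin (p ^ r)) ℂ :=
        fun t => proj (psi (p ^ r) (p ^ t.1) (p ^ (r - t.1)) t.2.1 t.2.2) with hP
    set σ : Matrix (Fin (p ^ r)) (Fin (p ^ r)) ℂ := ∑ t ∈ Δ, w t • P t with hσ
    have hPmem : ∀ t ∈ Δ, P t ∈ pureKD (p ^ r) := by
      intro t ht
      rw [hΔ, Finset.mem_sigma, Finset.mem_product] at ht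
      exact ⟨p ^ t.1, p ^ (r - t.1), t.2.1, t.2.2,
        hpow t.1 (by have := Finset.mem_range.mp ht.1; omega),
        Finset.mem_range.mp ht.2.1, Finset.mem_range.mp ht.2.2, rfl⟩
    have hKDσ : ∀ i j : Fin (p ^ r), KD σ i j =
        ((Fg p r g' (i:ℕ) (j:ℕ) / (p ^ r : ℕ) : ℝ) : ℂ) := by
      intro i j
      rw [hσ, KD_sum_smul]
      have hterm : ∀ t ∈ Δ, (w t : ℂ) * KD (P t) i j =
          ((if ((i:ℕ) % p ^ (r - t.1) = t.2.1 ∧ (j:ℕ) % p ^ t.1 = t.2.2)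
            then w t else 0) / ((p ^ r : ℕ) : ℝ) : ℝ) := by
        intro t ht
        rw [hΔ, Finset.mem_sigma, Finset.mem_product] at ht
        rw [hP]
        rw [KD_proj (hpow t.1 (by have := Finset.mem_range.mp ht.1; omega)) (Finset.mem_range.mp ht.2.1)
          (Finset.mem_range.mp ht.2.2) i j]
        by_cases hcond : (i:ℕ) % p ^ (r - t.1) = t.2.1 ∧ (j:ℕ) % p ^ t.1 = t.2.2
        · rw [if_pos hcond, if_pos hcond]
          push_cast
          ring
        · rw [if_neg hcond, if_neg hcond]
          push_cast
          ring
      rw [Finset.sum_congr rfl hterm]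
      rw [← Complex.ofReal_sum]
      congr 1
      rw [← Finset.sum_div]
      congr 1
      -- ∑ over Δ of indicators = Fg
      rw [hΔ, Finset.sum_sigma]
      rw [Fg]
      apply Finset.sum_congr rfl
      intro a ha
      rw [Finset.mem_range] at ha
      have hmlt : (i:ℕ) % p ^ (r - a) < p ^ (r - a) := Nat.mod_lt _ (pow_pos hp.pos _)
      have hslt : (j:ℕ) % p ^ a < p ^ a := Nat.mod_lt _ (pow_pos hp.pos _)
      exact sumCollapseKD (fun m s => g' a m s) _ _ hmlt hslt
    have hρσ : ρ = σ := by
      apply KD_inj hd0.ne' ρ σ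
      intro i j
      rw [hKDF i j, hKDσ i j, hg'eq]
    -- trace and convexity
    have htrσ : σ.trace = ((∑ t ∈ Δ, w t : ℝ) : ℂ) := by
      rw [hσ, Matrix.trace_sum]
      rw [Complex.ofReal_sum]
      apply Finset.sum_congr rfl
      intro t ht
      rw [hΔ, Finset.mem_sigma, Finset.mem_product] at ht
      rw [Matrix.trace_smul, hP]
      rw [trace_proj (hpow t.1 (by have := Finset.mem_range.mp ht.1; omega))
        (Finset.mem_range.mp ht.2.1) (Finset.mem_range.mp ht.2.2)]
      rw [Complex.real_smul, mul_one]
    have hsumw : ∑ t ∈ Δ, w t = 1 := by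
      have h1 := htr
      rw [hρσ, htrσ] at h1
      exact_mod_cast h1
    have hcm : σ = Δ.centerMass w P := by
      rw [Finset.centerMass, hsumw]
      simp
      exact hσ
    rw [hρσ, hcm]
    exact Finset.centerMass_mem_convexHull Δ (fun t _ => hg'pos _ _ _)
      (by rw [hsumw]; norm_num) hPmem
  · -- easy direction: convex hull ⊆ classical ∩ span
    apply convexHull_min
    · intro M hM
      have hMspan := Submodule.subset_span (R := ℝ) hM
      obtain ⟨x, y, m, s, hxy, hm, hs, hMe⟩ := hM
      have hx : 0 < x := lt_of_le_of_lt (Nat.zero_le s) hs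
      refine ⟨⟨?_, ?_, ?_⟩, hMspan⟩
      · rw [hMe]
        exact proj_posSemidef _
      · rw [hMe]
        exact trace_proj hxy hm hs
      · intro i j
        rw [hMe, KD_proj hxy hm hs i j]
        by_cases hcond : (i:ℕ) % y = m ∧ (j:ℕ) % x = s
        · rw [if_pos hcond]
          have : (1 / ((p ^ r : ℕ) : ℂ)) = ((1 / ((p ^ r : ℕ) : ℝ) : ℝ) : ℂ) := by
            push_cast
            ring
          rw [this]
          exact Complex.zero_le_real.mpr (by positivity)
        · rw [if_neg hcond]
      -- done
    · apply Convex.inter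
      · -- the KD-classical set is convex
        intro ρ1 h1 ρ2 h2 a b ha hb hab
        obtain ⟨h1p, h1t, h1k⟩ := h1
        obtain ⟨h2p, h2t, h2k⟩ := h2
        refine ⟨?_, ?_, ?_⟩
        · exact Matrix.PosSemidef.add (posSemidef_smul_real h1p ha) (posSemidef_smul_real h2p hb)
        · rw [Matrix.trace_add, Matrix.trace_smul, Matrix.trace_smul, h1t, h2t]
          rw [Complex.real_smul, Complex.real_smul, mul_one, mul_one]
          exact_mod_cast hab
        · intro i j
          have hlin : KD (a • ρ1 + b • ρ2) i j =
              (a : ℂ) * KD ρ1 i j + (b : ℂ) * KD ρ2 i j := by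
            have e1 : KD (a • ρ1 + b • ρ2) i j = KDlin (p^r) i j (a • ρ1 + b • ρ2) := rfl
            rw [e1, map_add, map_smul, map_smul]
            rw [Complex.real_smul, Complex.real_smul]
            rfl
          rw [hlin]
          apply add_nonneg
          · exact mul_nonneg (Complex.zero_le_real.mpr ha) (h1k i j)
          · exact mul_nonneg (Complex.zero_le_real.mpr hb) (h2k i j)
      · exact Submodule.convex _
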